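/- Fix a real number c ≠ 0. Let (X,Y) : [s₀,∞) → ℝ² be a C¹ solution of X' = c X Y, Y' = -c X². Then X(s)² + Y(s)² is constant, say equal to ρ² with ρ ≥ 0; and if ρ > 0 the solution is given explicitly by Y(s) = ρ((ρ+η)e^{-cρs} - (ρ-η)e^{cρs}) / ((ρ+η)e^{-cρs} + (ρ-η)e^{cρs}) and X(s) = 2ρξ / ((ρ+η)e^{-cρs} + (ρ-η)e^{cρs}) for some real constants ξ, η with ξ² + η² = ρ². -/

import Mathlib

open Set

lemma constOn {s₀ : ℝ} {f : ℝ → ℝ} (hf : ∀ s ≥ s₀, HasDerivAt f 0 s) :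
    ∀ s ≥ s₀, f s = f s₀ := by
  intro s hs
  rcases eq_or_lt_of_le hs with h | h
  · rw [← h]
  · refine constant_of_has_deriv_right_zero
      (fun x hx => (hf x hx.1).continuousAt.continuousWithinAt)
      (fun x hx => ((hf x hx.1).hasDerivWithinAt)) s ⟨hs, le_refl s⟩

lemma linODE {s₀ : ℝ} {g f : ℝ → ℝ} (hg : Continuous g)
    (hf : ∀ s ≥ s₀, HasDerivAt f (g s * f s) s) :
    ∀ s ≥ s₀, f s = f s₀ * Real.exp (∫ t in s₀..s, g t) := by
  set G : ℝ → ℝ := fun s => ∫ t in s₀..s, g t with hGdef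
  have hG : ∀ s, HasDerivAt G (g s) s := fun s =>
    intervalIntegral.integral_hasDerivAt_right (hg.intervalIntegrable _ _)
      (hg.stronglyMeasurable.stronglyMeasurableAtFilter) hg.continuousAt
  have h0 : ∀ s ≥ s₀, HasDerivAt (fun s => f s * Real.exp (-(G s))) 0 s := by
    intro s hs
    have := (hf s hs).mul ((hG s).neg.exp)
    refine this.congr_deriv (Eq.symm ?_)
    ring
  intro s hs
  have key := constOn h0 s hs
  simp only [hGdef, intervalIntegral.integral_same, neg_zero, Real.exp_zero, mul_one] at key
  have : f s * Real.exp (-(G s)) * Real.exp (G s) = f s₀ * Real.exp (G s) := by rw [key]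
  rwa [mul_assoc, ← Real.exp_add, neg_add_cancel, Real.exp_zero, mul_one] at this

lemma signOn {s₀ : ℝ} {f : ℝ → ℝ} (hcont : ContinuousOn f (Ici s₀))
    (hne : ∀ s ≥ s₀, f s ≠ 0) (h0 : 0 < f s₀) : ∀ s ≥ s₀, 0 < f s := by
  intro s hs
  by_contra h
  push_neg at h
  have hlt : f s < 0 := lt_of_le_of_ne h (hne s hs)
  have hsub : Icc s₀ s ⊆ Ici s₀ := Icc_subset_Ici_self
  have := intermediate_value_Icc' hs (hcont.mono hsub)
  have h0mem : (0:ℝ) ∈ Icc (f s) (f s₀) := ⟨hlt.le, h0.le⟩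
  obtain ⟨x, hx, hfx⟩ := this h0mem
  exact hne x hx.1 hfx

set_option maxHeartbeats 1000000 in
theorem stmt9 (c s₀ ρ : ℝ) (hc : c ≠ 0) (hρ : 0 ≤ ρ)
    (X Y : ℝ → ℝ)
    (hX : ∀ s ≥ s₀, HasDerivAt X (c * X s * Y s) s)
    (hY : ∀ s ≥ s₀, HasDerivAt Y (-c * X s ^ 2) s)
    (hinit : X s₀ ^ 2 + Y s₀ ^ 2 = ρ ^ 2) :
    (∀ s ≥ s₀, X s ^ 2 + Y s ^ 2 = ρ ^ 2) ∧
    (0 < ρ → ∃ ξ η : ℝ, ξ ^ 2 + η ^ 2 = ρ ^ 2 ∧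
      ∀ s ≥ s₀,
        Y s = ρ * ((ρ + η) * Real.exp (-c * ρ * s) - (ρ - η) * Real.exp (c * ρ * s)) /
          ((ρ + η) * Real.exp (-c * ρ * s) + (ρ - η) * Real.exp (c * ρ * s)) ∧
        X s = 2 * ρ * ξ /
          ((ρ + η) * Real.exp (-c * ρ * s) + (ρ - η) * Real.exp (c * ρ * s))) := by
  -- conservation
  have hcons : ∀ s ≥ s₀, X s ^ 2 + Y s ^ 2 = ρ ^ 2 := by
    have h0 : ∀ s ≥ s₀, HasDerivAt (fun s => X s ^ 2 + Y s ^ 2) 0 s := by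
      intro s hs
      have := ((hX s hs).pow 2).add ((hY s hs).pow 2)
      refine this.congr_deriv (Eq.symm ?_)
      ring
    intro s hs
    have := constOn h0 s hs
    rw [this, hinit]
  refine ⟨hcons, ?_⟩
  intro hρpos
  -- continuous extension of Y
  have hYcont : ContinuousOn Y (Ici s₀) := fun x hx =>
    (hY x hx).continuousAt.continuousWithinAt
  set YC : ℝ → ℝ := fun t => Y (max t s₀) with hYCdef
  have hYCcont : Continuous YC :=
    hYcont.comp_continuous (continuous_id.max continuous_const)
      (fun x => le_max_right x s₀)
  have hYCeq : ∀ s ≥ s₀, YC s = Y s := by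
    intro s hs
    simp only [hYCdef, max_eq_left hs]
  -- A and B
  set A : ℝ → ℝ := fun t => ρ + Y t with hAdef
  set B : ℝ → ℝ := fun t => ρ - Y t with hBdef
  set gA : ℝ → ℝ := fun t => -c * (ρ - YC t) with hgAdef
  set gB : ℝ → ℝ := fun t => c * (ρ + YC t) with hgBdef
  have hgAc : Continuous gA := continuous_const.mul (continuous_const.sub hYCcont)
  have hgBc : Continuous gB := continuous_const.mul (continuous_const.add hYCcont)
  have hA' : ∀ s ≥ s₀, HasDerivAt A (gA s * A s) s := by
    intro s hs
    have := (hY s hs).const_add ρ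
    refine this.congr_deriv (Eq.symm ?_)
    simp only [hgAdef, hAdef, hYCeq s hs]
    linear_combination c * hcons s hs
  have hB' : ∀ s ≥ s₀, HasDerivAt B (gB s * B s) s := by
    intro s hs
    have := (hY s hs).const_sub ρ
    refine this.congr_deriv (Eq.symm ?_)
    simp only [hgBdef, hBdef, hYCeq s hs]
    linear_combination (-c) * hcons s hs
  have hAf := linODE hgAc hA'
  have hBf := linODE hgBc hB'
  have hsum : ∀ s : ℝ, (∫ t in s₀..s, gB t) = (∫ t in s₀..s, gA t) + 2 * c * ρ * (s - s₀) := by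
    intro s
    have h1 : (∫ t in s₀..s, gB t) - (∫ t in s₀..s, gA t) = ∫ t in s₀..s, (gB t - gA t) :=
      (intervalIntegral.integral_sub (hgBc.intervalIntegrable _ _)
        (hgAc.intervalIntegrable _ _)).symm
    have h2 : (fun t => gB t - gA t) = fun _ : ℝ => 2 * c * ρ := by
      funext t
      simp only [hgAdef, hgBdef]
      ring
    rw [h2] at h1
    rw [intervalIntegral.integral_const] at h1
    have h3 : (∫ t in s₀..s, gB t) - (∫ t in s₀..s, gA t) = 2 * c * ρ * (s - s₀) := by
      rw [h1]; simp [smul_eq_mul]; ring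
    linarith
  -- initial values
  have hA0 : 0 ≤ A s₀ := by
    simp only [hAdef]
    nlinarith [sq_nonneg (X s₀), sq_nonneg (ρ + Y s₀)]
  have hB0 : 0 ≤ B s₀ := by
    simp only [hBdef]
    nlinarith [sq_nonneg (X s₀), sq_nonneg (ρ - Y s₀)]
  rcases eq_or_lt_of_le hA0 with hA00 | hA0pos
  · -- Y ≡ -ρ, X ≡ 0
    refine ⟨0, -ρ, by ring, ?_⟩
    intro s hs
    have hAs : A s = 0 := by rw [hAf s hs, ← hA00]; ring
    have hYs : Y s = -ρ := by
      have : ρ + Y s = 0 := hAs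
      linarith
    have hXs : X s = 0 := by
      have h2 : X s ^ 2 = 0 := by
        have := hcons s hs
        rw [hYs] at this
        nlinarith
      exact pow_eq_zero_iff (by norm_num) |>.mp h2
    have hpos : 0 < (ρ + -ρ) * Real.exp (-c * ρ * s) + (ρ - -ρ) * Real.exp (c * ρ * s) := by
      have h2 : (ρ + -ρ) * Real.exp (-c * ρ * s) + (ρ - -ρ) * Real.exp (c * ρ * s)
          = 2 * ρ * Real.exp (c * ρ * s) := by ring
      rw [h2]
      exact mul_pos (by linarith) (Real.exp_pos _)
    constructor
    · rw [hYs, eq_div_iff (ne_of_gt hpos)]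
      ring
    · rw [hXs]
      rw [eq_comm, div_eq_iff (ne_of_gt hpos)]
      ring
  rcases eq_or_lt_of_le hB0 with hB00 | hB0pos
  · -- Y ≡ ρ, X ≡ 0
    refine ⟨0, ρ, by ring, ?_⟩
    intro s hs
    have hBs : B s = 0 := by rw [hBf s hs, ← hB00]; ring
    have hYs : Y s = ρ := by
      have : ρ - Y s = 0 := hBs
      linarith
    have hXs : X s = 0 := by
      have h2 : X s ^ 2 = 0 := by
        have := hcons s hs
        rw [hYs] at this
        nlinarith
      exact pow_eq_zero_iff (by norm_num) |>.mp h2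
    have hpos : 0 < (ρ + ρ) * Real.exp (-c * ρ * s) + (ρ - ρ) * Real.exp (c * ρ * s) := by
      have h2 : (ρ + ρ) * Real.exp (-c * ρ * s) + (ρ - ρ) * Real.exp (c * ρ * s)
          = 2 * ρ * Real.exp (-c * ρ * s) := by ring
      rw [h2]
      exact mul_pos (by linarith) (Real.exp_pos _)
    constructor
    · rw [hYs, eq_div_iff (ne_of_gt hpos)]
      ring
    · rw [hXs]
      rw [eq_comm, div_eq_iff (ne_of_gt hpos)]
      ring
  -- generic case: A s₀ > 0, B s₀ > 0
  set K : ℝ := (A s₀ / B s₀) * Real.exp (2 * c * ρ * s₀) with hKdef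
  have hKpos : 0 < K := mul_pos (div_pos hA0pos hB0pos) (Real.exp_pos _)
  have hK1 : 0 < K + 1 := by linarith
  set η : ℝ := ρ * (K - 1) / (K + 1) with hηdef
  have hplus : ρ + η = 2 * ρ * K / (K + 1) := by
    rw [hηdef]
    field_simp
    ring
  have hminus : ρ - η = 2 * ρ / (K + 1) := by
    rw [hηdef]
    field_simp
    ring
  have hplus_pos : 0 < ρ + η := by
    rw [hplus]
    exact div_pos (by nlinarith) hK1
  have hminus_pos : 0 < ρ - η := by
    rw [hminus]
    exact div_pos (by nlinarith) hK1
  have hη1 : B s₀ * (ρ + η) = A s₀ * (ρ - η) * Real.exp (2 * c * ρ * s₀) := by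
    rw [hplus, hminus, hKdef]
    field_simp
  -- the key cross identity
  have hcross : ∀ s ≥ s₀,
      A s * ((ρ - η) * Real.exp (c * ρ * s)) = B s * ((ρ + η) * Real.exp (-c * ρ * s)) := by
    intro s hs
    rw [hAf s hs, hBf s hs, hsum s, Real.exp_add]
    set P := Real.exp (∫ t in s₀..s, gA t) with hPdef
    have key : Real.exp (2 * c * ρ * (s - s₀)) * Real.exp (-c * ρ * s)
        * Real.exp (2 * c * ρ * s₀) = Real.exp (c * ρ * s) := by
      rw [← Real.exp_add, ← Real.exp_add]
      ring_nf
    apply mul_right_cancel₀ (Real.exp_ne_zero (2 * c * ρ * s₀))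
    linear_combination (-(B s₀ * (ρ + η) * P)) * key
      - (P * Real.exp (c * ρ * s)) * hη1
  have hABsum : ∀ s, A s + B s = 2 * ρ := by
    intro s
    simp only [hAdef, hBdef]
    ring
  have hBD : ∀ s ≥ s₀, B s * ((ρ + η) * Real.exp (-c * ρ * s) + (ρ - η) * Real.exp (c * ρ * s))
      = 2 * ρ * (ρ - η) * Real.exp (c * ρ * s) := by
    intro s hs
    linear_combination (-1) * hcross s hs + ((ρ - η) * Real.exp (c * ρ * s)) * hABsum s
  have hAD : ∀ s ≥ s₀, A s * ((ρ + η) * Real.exp (-c * ρ * s) + (ρ - η) * Real.exp (c * ρ * s))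
      = 2 * ρ * (ρ + η) * Real.exp (-c * ρ * s) := by
    intro s hs
    linear_combination hcross s hs + ((ρ + η) * Real.exp (-c * ρ * s)) * hABsum s
  have hDpos : ∀ s, 0 < (ρ + η) * Real.exp (-c * ρ * s) + (ρ - η) * Real.exp (c * ρ * s) := by
    intro s
    have h1 := mul_pos hplus_pos (Real.exp_pos (-c * ρ * s))
    have h2 := mul_pos hminus_pos (Real.exp_pos (c * ρ * s))
    linarith
  -- positivity of A, B along the flow; X never vanishes
  have hApos : ∀ s ≥ s₀, 0 < A s := by
    intro s hs
    rw [hAf s hs]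
    exact mul_pos hA0pos (Real.exp_pos _)
  have hBpos : ∀ s ≥ s₀, 0 < B s := by
    intro s hs
    rw [hBf s hs]
    exact mul_pos hB0pos (Real.exp_pos _)
  have hX2 : ∀ s ≥ s₀, A s * B s = X s ^ 2 := by
    intro s hs
    simp only [hAdef, hBdef]
    linear_combination (-1) * hcons s hs
  have hXne : ∀ s ≥ s₀, X s ≠ 0 := by
    intro s hs h0
    have := hX2 s hs
    rw [h0] at this
    nlinarith [hApos s hs, hBpos s hs]
  have hXcont : ContinuousOn X (Ici s₀) := fun x hx =>
    (hX x hx).continuousAt.continuousWithinAt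
  -- sign of X
  set σ : ℝ := if 0 < X s₀ then 1 else -1 with hσdef
  have hσ2 : σ ^ 2 = 1 := by
    rw [hσdef]
    split <;> norm_num
  have hsign : ∀ s ≥ s₀, 0 < σ * X s := by
    by_cases h0 : 0 < X s₀
    · have hpos := signOn hXcont hXne h0
      intro s hs
      simp only [hσdef, if_pos h0, one_mul]
      exact hpos s hs
    · have hneg : 0 < -X s₀ := by
        rcases lt_trichotomy (X s₀) 0 with h | h | h
        · linarith
        · exact absurd h (hXne s₀ (le_refl s₀))
        · exact absurd h h0
      have hpos := signOn (hXcont.neg) (fun s hs => neg_ne_zero.mpr (hXne s hs)) hneg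
      intro s hs
      simp only [hσdef, if_neg h0]
      have := hpos s hs
      linarith [show (-X) s = -X s from rfl]
  set ξ : ℝ := σ * Real.sqrt ((ρ + η) * (ρ - η)) with hξdef
  have hsq_nonneg : 0 ≤ (ρ + η) * (ρ - η) := le_of_lt (mul_pos hplus_pos hminus_pos)
  have hξ2 : ξ ^ 2 = (ρ + η) * (ρ - η) := by
    rw [hξdef, mul_pow, hσ2, one_mul, sq, Real.mul_self_sqrt hsq_nonneg]
  have hσξ : 0 < σ * ξ := by
    rw [hξdef, ← mul_assoc, ← sq, hσ2, one_mul]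
    exact Real.sqrt_pos.mpr (mul_pos hplus_pos hminus_pos)
  refine ⟨ξ, η, by nlinarith [hξ2], ?_⟩
  intro s hs
  have hDp := hDpos s
  have hDne := ne_of_gt hDp
  constructor
  · rw [eq_div_iff hDne]
    have hYB : Y s = ρ - B s := by
      simp only [hBdef]
      ring
    linear_combination (-1) * hBD s hs
      + ((ρ + η) * Real.exp (-c * ρ * s) + (ρ - η) * Real.exp (c * ρ * s)) * hYB
  · rw [eq_div_iff hDne]
    have hma : Real.exp (-c * ρ * s) * Real.exp (c * ρ * s) = 1 := by
      rw [← Real.exp_add, show -c * ρ * s + c * ρ * s = 0 by ring, Real.exp_zero]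
    have hsq : (X s * ((ρ + η) * Real.exp (-c * ρ * s) + (ρ - η) * Real.exp (c * ρ * s))) ^ 2
        = (2 * ρ * ξ) ^ 2 := by
      have e1 : X s ^ 2 * ((ρ + η) * Real.exp (-c * ρ * s) + (ρ - η) * Real.exp (c * ρ * s)) ^ 2
          = (A s * ((ρ + η) * Real.exp (-c * ρ * s) + (ρ - η) * Real.exp (c * ρ * s)))
          * (B s * ((ρ + η) * Real.exp (-c * ρ * s) + (ρ - η) * Real.exp (c * ρ * s))) := by
        linear_combination (((ρ + η) * Real.exp (-c * ρ * s)
          + (ρ - η) * Real.exp (c * ρ * s)) ^ 2) * (hX2 s hs).symm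
      rw [hAD s hs, hBD s hs] at e1
      linear_combination e1 + (4 * ρ ^ 2 * ((ρ + η) * (ρ - η))) * hma
        + (-(4 * ρ ^ 2)) * hξ2
    have hfact : (X s * ((ρ + η) * Real.exp (-c * ρ * s) + (ρ - η) * Real.exp (c * ρ * s))
        - 2 * ρ * ξ) * (X s * ((ρ + η) * Real.exp (-c * ρ * s)
        + (ρ - η) * Real.exp (c * ρ * s)) + 2 * ρ * ξ) = 0 := by
      linear_combination hsq
    rcases mul_eq_zero.mp hfact with h | h
    · linarith
    · exfalso
      have h1 : 0 < σ * (X s * ((ρ + η) * Real.exp (-c * ρ * s)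
          + (ρ - η) * Real.exp (c * ρ * s))) := by
        have := hsign s hs
        have := hDp
        nlinarith
      have h2 : 0 < σ * (2 * ρ * ξ) := by nlinarith [hσξ]
      have h3 : σ * (X s * ((ρ + η) * Real.exp (-c * ρ * s)
          + (ρ - η) * Real.exp (c * ρ * s)) + 2 * ρ * ξ) = 0 := by
        rw [h, mul_zero]
      nlinarith [h1, h2, h3]
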